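/- Let K be a valued difference field satisfying Axiom 4_n, let G be a σ-polynomial over the valuation ring O of order ≤ n, and let a ∈ O be such that G is σ-henselian at a and G(a) ≠ 0. Then there is b ∈ O such that v(a − b) ≥ v(G(a)) and v(G(b)) > v(G(a)). Moreover, for any such b one has v(a − b) = v(G(a)), and G is σ-henselian at b. -/

import Mathlib

/-!
Common definitions: three-sorted valued (difference) fields, σ-polynomials,
pc-sequences, axioms from the paper.
-/

namespace VDFPaper

universe u v w

/-- A valued field, presented as a three-sorted structure `(K, Γ, k; v, π)`.
The valuation is extended to `v : K → WithTop Γ` with `v 0 = ⊤`, and the residue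
map `π : O → k` is extended to all of `K` by `0` outside the valuation ring. -/
structure ValuedField (K : Type u) (Γ : Type v) (k : Type w)
    [Field K] [AddCommGroup Γ] [LinearOrder Γ] [IsOrderedAddMonoid Γ] [Field k] where
  v : K → WithTop Γ
  π : K → k
  v_top_iff : ∀ a : K, v a = ⊤ ↔ a = 0
  v_mul : ∀ a b : K, v (a * b) = v a + v b
  v_add : ∀ a b : K, min (v a) (v b) ≤ v (a + b)
  v_surj : ∀ γ : Γ, ∃ a : K, v a = (γ : WithTop Γ)
  π_add : ∀ a b : K, 0 ≤ v a → 0 ≤ v b → π (a + b) = π a + π b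
  π_mul : ∀ a b : K, 0 ≤ v a → 0 ≤ v b → π (a * b) = π a * π b
  π_one : π 1 = 1
  π_surj : Function.Surjective π
  π_eq_zero_iff : ∀ a : K, 0 ≤ v a → (π a = 0 ↔ 0 < v a)
  π_junk : ∀ a : K, ¬ 0 ≤ v a → π a = 0

/-- A valued difference field (satisfying Axiom 1: `v (σ a) = v a`);
`σr` is the induced automorphism of the residue field. -/
structure ValuedDiffField (K : Type u) (Γ : Type v) (k : Type w)
    [Field K] [AddCommGroup Γ] [LinearOrder Γ] [IsOrderedAddMonoid Γ] [Field k]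
    extends ValuedField K Γ k where
  σ : K ≃+* K
  σr : k ≃+* k
  v_σ : ∀ a : K, v (σ a) = v a
  π_σ : ∀ a : K, π (σ a) = σr (π a)

/-- `iterEquiv s m` is the `m`-th iterate (`m : ℤ`) of the automorphism `s`. -/
def iterEquiv {R : Type*} [Mul R] [Add R] (s : R ≃+* R) : ℤ → R → R
  | Int.ofNat m => (⇑s)^[m]
  | Int.negSucc m => (⇑s.symm)^[m + 1]

/-- Evaluation of the σ-polynomial `f(x, σ x, …, σⁿ x)` at `a`. -/
noncomputable def evalDiff {R : Type*} [CommSemiring R] (s : R → R) {n : ℕ}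
    (f : MvPolynomial (Fin (n + 1)) R) (a : R) : R :=
  MvPolynomial.eval (fun i : Fin (n + 1) => s^[(i : ℕ)] a) f

/-- The Taylor coefficient `f_(i)` (Hasse derivative), characterized by
`f(x+y) = Σ_i f_(i)(x) · y^i`. -/
noncomputable def taylorCoeff {R : Type*} [CommRing R] {n : ℕ}
    (i : Fin (n + 1) →₀ ℕ) (f : MvPolynomial (Fin (n + 1)) R) :
    MvPolynomial (Fin (n + 1)) R :=
  ∑ d ∈ f.support,
    MvPolynomial.monomial (d - i)
      ((∏ j ∈ d.support ∪ i.support, ((d j).choose (i j) : R)) * f.coeff d)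

/-- Apply a (not necessarily ring-hom) map to all coefficients; used for
reduction of σ-polynomials over the valuation ring to the residue field. -/
noncomputable def mapCoeffs {R S : Type*} [CommSemiring R] [CommSemiring S]
    (π : R → S) {n : ℕ} (f : MvPolynomial (Fin (n + 1)) R) :
    MvPolynomial (Fin (n + 1)) S :=
  ∑ d ∈ f.support, MvPolynomial.monomial d (π (f.coeff d))

/-- `|j| = j₀ + ⋯ + jₙ` for a multi-index. -/
def degSum {n : ℕ} (j : Fin (n + 1) →₀ ℕ) : ℕ := j.sum fun _ e => e

/-- The order of a σ-polynomial: the largest `i` such that `σ^i x` occurs. -/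
def sigmaOrder {R : Type*} [CommSemiring R] {n : ℕ}
    (f : MvPolynomial (Fin (n + 1)) R) : ℕ :=
  f.support.sup fun d => d.support.sup fun j => (j : ℕ)

lemma sigmaOrder_le {R : Type*} [CommSemiring R] {n : ℕ}
    (f : MvPolynomial (Fin (n + 1)) R) : sigmaOrder f ≤ n :=
  Finset.sup_le fun d _ => Finset.sup_le fun j _ => Nat.lt_succ_iff.mp j.isLt

/-- Complexity of a σ-polynomial: `(order + 1, degree in σ^order x, total degree)`
for nonconstant ones, `(0,0,0)` for constants (so constants are of lower
complexity than all nonconstant σ-polynomials, as in the paper). -/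
noncomputable def sigmaComplexity {R : Type*} [CommSemiring R] {n : ℕ}
    (f : MvPolynomial (Fin (n + 1)) R) : ℕ × ℕ × ℕ :=
  if f.totalDegree = 0 then (0, 0, 0)
  else (sigmaOrder f + 1,
    MvPolynomial.degreeOf (⟨sigmaOrder f, Nat.lt_succ_of_le (sigmaOrder_le f)⟩ : Fin (n + 1)) f,
    f.totalDegree)

/-- Lexicographic order on complexities. -/
def TripleLT (a b : ℕ × ℕ × ℕ) : Prop :=
  a.1 < b.1 ∨ (a.1 = b.1 ∧ (a.2.1 < b.2.1 ∨ (a.2.1 = b.2.1 ∧ a.2.2 < b.2.2)))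

/-- `α` is σ-transcendental over the difference subfield given by `φ : E →+* F`,
where `s` is the difference operator of `F`. -/
def SigmaTranscendentalOver {E F : Type*} [Field E] [Field F]
    (φ : E →+* F) (s : F → F) (α : F) : Prop :=
  ∀ (n : ℕ) (f : MvPolynomial (Fin (n + 1)) E), f ≠ 0 →
    evalDiff s (MvPolynomial.map φ f) α ≠ 0

/-- `g` is a minimal σ-polynomial of `α` over the difference subfield `φ : E →+* F`. -/
def IsMinimalSigmaPolyOver {E F : Type*} [Field E] [Field F]
    (φ : E →+* F) (s : F → F) {n : ℕ} (g : MvPolynomial (Fin (n + 1)) E) (α : F) : Prop :=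
  g ≠ 0 ∧ evalDiff s (MvPolynomial.map φ g) α = 0 ∧
    ∀ (m : ℕ) (h : MvPolynomial (Fin (m + 1)) E), h ≠ 0 →
      TripleLT (sigmaComplexity h) (sigmaComplexity g) →
      evalDiff s (MvPolynomial.map φ h) α ≠ 0

/-- The difference subfield `E⟨a⟩` generated over `S = E` by `a`:
the subfield generated by `S` together with all `σ^m a`, `m : ℤ`. -/
def genDiffSubfield {F : Type*} [Field F] (s : F ≃+* F) (S : Set F) (a : F) : Subfield F :=
  Subfield.closure (S ∪ Set.range fun m : ℤ => iterEquiv s m a)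

/-- An embedding of valued fields (three-sorted). -/
structure ValEmbedding {K₁ Γ₁ k₁ K₂ Γ₂ k₂ : Type*}
    [Field K₁] [AddCommGroup Γ₁] [LinearOrder Γ₁] [IsOrderedAddMonoid Γ₁] [Field k₁]
    [Field K₂] [AddCommGroup Γ₂] [LinearOrder Γ₂] [IsOrderedAddMonoid Γ₂] [Field k₂]
    (M₁ : ValuedField K₁ Γ₁ k₁) (M₂ : ValuedField K₂ Γ₂ k₂) where
  toField : K₁ →+* K₂
  toGroup : Γ₁ → Γ₂
  toGroup_add : ∀ x y : Γ₁, toGroup (x + y) = toGroup x + toGroup y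
  toGroup_mono : StrictMono toGroup
  comm_v : ∀ a : K₁, M₂.v (toField a) = WithTop.map toGroup (M₁.v a)
  toRes : k₁ →+* k₂
  comm_π : ∀ a : K₁, 0 ≤ M₁.v a → M₂.π (toField a) = toRes (M₁.π a)

/-- An embedding (extension) of valued difference fields. -/
structure VDFEmbedding {K₁ Γ₁ k₁ K₂ Γ₂ k₂ : Type*}
    [Field K₁] [AddCommGroup Γ₁] [LinearOrder Γ₁] [IsOrderedAddMonoid Γ₁] [Field k₁]
    [Field K₂] [AddCommGroup Γ₂] [LinearOrder Γ₂] [IsOrderedAddMonoid Γ₂] [Field k₂]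
    (M₁ : ValuedDiffField K₁ Γ₁ k₁) (M₂ : ValuedDiffField K₂ Γ₂ k₂)
    extends ValEmbedding M₁.toValuedField M₂.toValuedField where
  comm_σ : ∀ a : K₁, toField (M₁.σ a) = M₂.σ (toField a)

/-- An extension is immediate if it induces bijections on value groups and residue fields. -/
def ValEmbedding.IsImmediate {K₁ Γ₁ k₁ K₂ Γ₂ k₂ : Type*}
    [Field K₁] [AddCommGroup Γ₁] [LinearOrder Γ₁] [IsOrderedAddMonoid Γ₁] [Field k₁]
    [Field K₂] [AddCommGroup Γ₂] [LinearOrder Γ₂] [IsOrderedAddMonoid Γ₂] [Field k₂]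
    {M₁ : ValuedField K₁ Γ₁ k₁} {M₂ : ValuedField K₂ Γ₂ k₂}
    (E : ValEmbedding M₁ M₂) : Prop :=
  Function.Surjective E.toGroup ∧ Function.Surjective E.toRes

def VDFEmbedding.IsImmediate {K₁ Γ₁ k₁ K₂ Γ₂ k₂ : Type*}
    [Field K₁] [AddCommGroup Γ₁] [LinearOrder Γ₁] [IsOrderedAddMonoid Γ₁] [Field k₁]
    [Field K₂] [AddCommGroup Γ₂] [LinearOrder Γ₂] [IsOrderedAddMonoid Γ₂] [Field k₂]
    {M₁ : ValuedDiffField K₁ Γ₁ k₁} {M₂ : ValuedDiffField K₂ Γ₂ k₂}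
    (E : VDFEmbedding M₁ M₂) : Prop :=
  E.toValEmbedding.IsImmediate

section Pc

variable {K : Type u} {Γ : Type v} {k : Type w}
variable [Field K] [AddCommGroup Γ] [LinearOrder Γ] [IsOrderedAddMonoid Γ] [Field k]

/-- A pc-sequence (pseudo-Cauchy sequence). The index type is assumed to be a
nonempty well-ordered set without greatest element where this matters. -/
def IsPcSeq {I : Type*} [LinearOrder I] (v : K → WithTop Γ) (a : I → K) : Prop :=
  ∃ ρ₀ : I, ∀ ρ ρ' ρ'' : I, ρ₀ ≤ ρ → ρ < ρ' → ρ' < ρ'' →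
    v (a ρ' - a ρ) < v (a ρ'' - a ρ')

/-- `a_ρ ⤳ x` : the sequence `a` pseudoconverges to `x`, i.e. `v (x - a_ρ)` is
eventually strictly increasing. -/
def PseudoLim {I : Type*} [LinearOrder I] (v : K → WithTop Γ) (a : I → K) (x : K) : Prop :=
  ∃ ρ₀ : I, ∀ ρ ρ' : I, ρ₀ ≤ ρ → ρ < ρ' → v (x - a ρ) < v (x - a ρ')

/-- Two pc-sequences are equivalent: they have the same pseudolimits in every
valued field extension. -/
def PcEquiv (M : ValuedField K Γ k) {I : Type*} [LinearOrder I] (a b : I → K) : Prop :=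
  ∀ (K' : Type u) (Γ' : Type v) (k' : Type w)
    [Field K'] [AddCommGroup Γ'] [LinearOrder Γ'] [IsOrderedAddMonoid Γ'] [Field k']
    (M' : ValuedField K' Γ' k') (E : ValEmbedding M M') (x : K'),
    PseudoLim M'.v (fun ρ => E.toField (a ρ)) x ↔
    PseudoLim M'.v (fun ρ => E.toField (b ρ)) x

end Pc

section Axioms

variable {K : Type u} {Γ : Type v} {k : Type w}
variable [Field K] [AddCommGroup Γ] [LinearOrder Γ] [IsOrderedAddMonoid Γ] [Field k]

/-- Axiom 2: every value is the value of an element of the fixed field. -/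
def Axiom2 (M : ValuedDiffField K Γ k) : Prop :=
  ∀ γ : Γ, ∃ a : K, M.σ a = a ∧ M.v a = (γ : WithTop Γ)

/-- Axiom 3 (a scheme about the residue difference field). -/
def Axiom3 (M : ValuedDiffField K Γ k) : Prop :=
  (∀ d : ℕ, 0 < d → ∃ y : k, (⇑M.σr)^[d] y ≠ y) ∧
  (∀ p : ℕ, p.Prime → ringChar k = p →
    ∀ d : ℤ, d ≠ 0 → ∀ e : ℕ, 0 < e → ∃ y : k, iterEquiv M.σr d y ≠ y ^ p ^ e)

/-- Axiom 4ₙ: solvability in the residue field of inhomogeneous linear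
σ̄-equations of order ≤ n. -/
def Axiom4n (M : ValuedDiffField K Γ k) (n : ℕ) : Prop :=
  ∀ α : Fin (n + 1) → k, (∃ i, α i ≠ 0) →
    ∃ y : k, 1 + ∑ i : Fin (n + 1), α i * (⇑M.σr)^[(i : ℕ)] y = 0

def Axiom4 (M : ValuedDiffField K Γ k) : Prop := ∀ n : ℕ, Axiom4n M n

/-- The Witt case for the prime `p`. -/
def WittCase (M : ValuedDiffField K Γ k) (p : ℕ) : Prop :=
  p.Prime ∧ ringChar K = 0 ∧ ringChar k = p ∧ PerfectField k ∧
  (∃ e : Γ, 0 < e ∧ (∀ γ : Γ, 0 < γ → e ≤ γ) ∧ M.v (p : K) = (e : WithTop Γ)) ∧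
  ∀ y : k, M.σr y = y ^ p

/-- Finitely ramified valued (difference) field. -/
def FinitelyRamified (M : ValuedDiffField K Γ k) : Prop :=
  ringChar K = 0 ∧ ∀ p : ℕ, p.Prime → ringChar k = p →
    {γ : Γ | 0 < γ ∧ (γ : WithTop Γ) < M.v (p : K)}.Finite

/-- Workable: Axioms 2 and 3, or Axiom 2 and a Witt case with infinite residue field. -/
def Workable (M : ValuedDiffField K Γ k) : Prop :=
  (Axiom2 M ∧ Axiom3 M) ∨ (Axiom2 M ∧ ∃ p : ℕ, WittCase M p ∧ Infinite k)

/-- All coefficients lie in the valuation ring. -/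
def CoeffsInO (M : ValuedField K Γ k) {n : ℕ} (f : MvPolynomial (Fin (n + 1)) K) : Prop :=
  ∀ d : Fin (n + 1) →₀ ℕ, 0 ≤ M.v (f.coeff d)

/-- `min_{|i| = 1} v (G_(i) (a))`. -/
noncomputable def vG1min (M : ValuedDiffField K Γ k) {n : ℕ}
    (f : MvPolynomial (Fin (n + 1)) K) (a : K) : WithTop Γ :=
  Finset.univ.inf fun i : Fin (n + 1) =>
    M.v (evalDiff (⇑M.σ) (taylorCoeff (Finsupp.single i 1) f) a)

/-- `G` is σ-henselian at `a` (with `G` over `O` and `a ∈ O`). -/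
def SigmaHenselAt (M : ValuedDiffField K Γ k) {n : ℕ}
    (f : MvPolynomial (Fin (n + 1)) K) (a : K) : Prop :=
  0 < M.v (evalDiff (⇑M.σ) f a) ∧ vG1min M f a = 0

/-- `K` is σ-henselian. -/
def SigmaHenselian (M : ValuedDiffField K Γ k) : Prop :=
  ∀ (n : ℕ) (f : MvPolynomial (Fin (n + 1)) K), CoeffsInO M.toValuedField f →
    ∀ a : K, 0 ≤ M.v a → SigmaHenselAt M f a →
      ∃ b : K, evalDiff (⇑M.σ) f b = 0 ∧ M.v (evalDiff (⇑M.σ) f a) ≤ M.v (a - b)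

/-- `(G, a)` is in σ-hensel configuration. -/
def HenselConfig (M : ValuedDiffField K Γ k) {n : ℕ}
    (f : MvPolynomial (Fin (n + 1)) K) (a : K) : Prop :=
  (∃ i : Fin (n + 1), evalDiff (⇑M.σ) (taylorCoeff (Finsupp.single i 1) f) a ≠ 0) ∧
  (evalDiff (⇑M.σ) f a = 0 ∨ ∃ γ : Γ,
    M.v (evalDiff (⇑M.σ) f a) = vG1min M f a + (γ : WithTop Γ) ∧
    ∀ j : Fin (n + 1) →₀ ℕ, 1 < degSum j →
      M.v (evalDiff (⇑M.σ) f a) <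
        M.v (evalDiff (⇑M.σ) (taylorCoeff j f) a) + degSum j • (γ : WithTop Γ))

/-- The pc-sequence `a` is of σ-algebraic type over `K`. -/
def OfSigmaAlgebraicType (M : ValuedDiffField K Γ k) {I : Type*} [LinearOrder I]
    (a : I → K) : Prop :=
  ∃ (n : ℕ) (G : MvPolynomial (Fin (n + 1)) K) (b : I → K),
    IsPcSeq M.v b ∧ PcEquiv M.toValuedField a b ∧
    PseudoLim M.v (fun ρ => evalDiff (⇑M.σ) G (b ρ)) 0

/-- The pc-sequence `a` is of σ-transcendental type over `K`. -/
def OfSigmaTranscendentalType (M : ValuedDiffField K Γ k) {I : Type*} [LinearOrder I]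
    (a : I → K) : Prop :=
  ∀ (n : ℕ) (G : MvPolynomial (Fin (n + 1)) K) (b : I → K),
    IsPcSeq M.v b → PcEquiv M.toValuedField a b →
    ¬ PseudoLim M.v (fun ρ => evalDiff (⇑M.σ) G (b ρ)) 0

/-- `G` is a minimal σ-polynomial of the pc-sequence `a` over `K`. -/
def IsMinPolyOfPcSeq (M : ValuedDiffField K Γ k) {I : Type*} [LinearOrder I]
    (a : I → K) {n : ℕ} (G : MvPolynomial (Fin (n + 1)) K) : Prop :=
  (∃ b : I → K, IsPcSeq M.v b ∧ PcEquiv M.toValuedField a b ∧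
    PseudoLim M.v (fun ρ => evalDiff (⇑M.σ) G (b ρ)) 0) ∧
  ∀ (m : ℕ) (H : MvPolynomial (Fin (m + 1)) K),
    TripleLT (sigmaComplexity H) (sigmaComplexity G) →
    ∀ b : I → K, IsPcSeq M.v b → PcEquiv M.toValuedField a b →
      ¬ PseudoLim M.v (fun ρ => evalDiff (⇑M.σ) H (b ρ)) 0

end Axioms

/-- A bundled extension of a valued field (with prescribed value-group and
residue sorts). -/
structure ValuedFieldExt {K : Type u} {Γ : Type v} {k : Type w}
    [Field K] [AddCommGroup Γ] [LinearOrder Γ] [IsOrderedAddMonoid Γ] [Field k]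
    (M : ValuedField K Γ k) (Γ' : Type v) (k' : Type w)
    [AddCommGroup Γ'] [LinearOrder Γ'] [IsOrderedAddMonoid Γ'] [Field k'] where
  carrier : Type u
  [fieldInst : Field carrier]
  str : ValuedField carrier Γ' k'
  emb : ValEmbedding M str

attribute [instance] ValuedFieldExt.fieldInst

/-- A bundled extension of a valued difference field. -/
structure VDFExt {K : Type u} {Γ : Type v} {k : Type w}
    [Field K] [AddCommGroup Γ] [LinearOrder Γ] [IsOrderedAddMonoid Γ] [Field k]
    (M : ValuedDiffField K Γ k) (Γ' : Type v) (k' : Type w)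
    [AddCommGroup Γ'] [LinearOrder Γ'] [IsOrderedAddMonoid Γ'] [Field k'] where
  carrier : Type u
  [fieldInst : Field carrier]
  str : ValuedDiffField carrier Γ' k'
  emb : VDFEmbedding M str

attribute [instance] VDFExt.fieldInst

section Max

variable {K : Type u} {Γ : Type v} {k : Type w}
variable [Field K] [AddCommGroup Γ] [LinearOrder Γ] [IsOrderedAddMonoid Γ] [Field k]

/-- Maximal valued field: no proper immediate valued field extension. -/
def MaximalValuedField (M : ValuedField K Γ k) : Prop :=
  ¬ ∃ Ext : ValuedFieldExt M Γ k,
      Ext.emb.IsImmediate ∧ ¬ Function.Surjective Ext.emb.toField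

/-- Maximal valued difference field: no proper immediate extension. -/
def MaximalVDF (M : ValuedDiffField K Γ k) : Prop :=
  ¬ ∃ Ext : VDFExt M Γ k,
      Ext.emb.IsImmediate ∧ ¬ Function.Surjective Ext.emb.toField

/-- Every element of the extension is σ-algebraic over the ground field. -/
def SigmaAlgebraicExt {Γ' : Type v} {k' : Type w}
    [AddCommGroup Γ'] [LinearOrder Γ'] [IsOrderedAddMonoid Γ'] [Field k']
    {M : ValuedDiffField K Γ k} (Ext : VDFExt M Γ' k') : Prop :=
  ∀ x : Ext.carrier, ∃ (n : ℕ) (f : MvPolynomial (Fin (n + 1)) K), f ≠ 0 ∧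
    evalDiff (⇑Ext.str.σ) (MvPolynomial.map Ext.emb.toField f) x = 0

/-- σ-algebraically maximal: no proper immediate σ-algebraic extension. -/
def SigmaAlgMaximal (M : ValuedDiffField K Γ k) : Prop :=
  ¬ ∃ Ext : VDFExt M Γ k,
      Ext.emb.IsImmediate ∧ SigmaAlgebraicExt Ext ∧
      ¬ Function.Surjective Ext.emb.toField

/-- Complete with a discrete valuation. -/
def CompleteDiscrete (M : ValuedField K Γ k) : Prop :=
  (∃ e : Γ ≃o ℤ, ∀ x y : Γ, e (x + y) = e x + e y) ∧
  ∀ u : ℕ → K,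
    (∀ γ : Γ, ∃ N : ℕ, ∀ m n : ℕ, N ≤ m → N ≤ n → m ≠ n →
      (γ : WithTop Γ) < M.v (u m - u n)) →
    ∃ x : K, ∀ γ : Γ, ∃ N : ℕ, ∀ n : ℕ, N ≤ n → (γ : WithTop Γ) < M.v (x - u n)

end Max

/-- `g` is an isomorphism of difference fields `A → A'` over `E`
(via `φ : E → F`, `φ' : E → F'`) sending `a` to `b`; `s, s'` are the difference
operators of the ambient fields. -/
def IsDiffIsoOver {E F F' : Type*} [Field E] [Field F] [Field F']
    (φ : E →+* F) (φ' : E →+* F') (s : F → F) (s' : F' → F')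
    (A : Subfield F) (A' : Subfield F') (a : F) (b : F') (g : A →+* F') : Prop :=
  (Set.range fun x : A => g x) = (A' : Set F') ∧
  (∀ (e : E) (he : φ e ∈ A), g ⟨φ e, he⟩ = φ' e) ∧
  (∀ ha : a ∈ A, g ⟨a, ha⟩ = b) ∧
  (∀ (x : A) (hx : s (x : F) ∈ A), g ⟨s (x : F), hx⟩ = s' (g x))

/-- As `IsDiffIsoOver`, and moreover valuation-preserving. -/
def IsValDiffIsoOver {E F F' : Type*} {Γ Γ' : Type*} [Field E] [Field F] [Field F']
    [AddCommGroup Γ] [LinearOrder Γ] [IsOrderedAddMonoid Γ] [AddCommGroup Γ'] [LinearOrder Γ'] [IsOrderedAddMonoid Γ']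
    (v : F → WithTop Γ) (v' : F' → WithTop Γ')
    (φ : E →+* F) (φ' : E →+* F') (s : F → F) (s' : F' → F')
    (A : Subfield F) (A' : Subfield F') (a : F) (b : F') (g : A →+* F') : Prop :=
  IsDiffIsoOver φ φ' s s' A A' a b g ∧
  ∀ x y : A, v (x : F) ≤ v (y : F) ↔ v' (g x) ≤ v' (g y)

/-- The `D`-transform substitution: `F(x₀,…,xₙ) ↦ F(W₀(y), …, Wₙ(y))` where
`W_j(y) = y₀^{p^j} + p y₁^{p^{j-1}} + ⋯ + p^j y_j`. -/
noncomputable def Dtransform (p : ℕ) {R : Type*} [CommSemiring R] {n : ℕ}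
    (F : MvPolynomial (Fin (n + 1)) R) : MvPolynomial (Fin (n + 1)) R :=
  MvPolynomial.bind₁ (fun j : Fin (n + 1) =>
    ∑ i : Fin (n + 1), if (i : ℕ) ≤ (j : ℕ) then
      MvPolynomial.C ((p : R) ^ (i : ℕ)) * MvPolynomial.X i ^ p ^ ((j : ℕ) - (i : ℕ))
    else 0) F

/-- The initial segment of the ordinals below `lam`, used as a well-ordered
index set. -/
abbrev OrdSeg (lam : Ordinal.{0}) : Type 1 := {o : Ordinal.{0} // o < lam}



/-! ### Auxiliary lemmas for the proof of Lemma 5.2 -/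

section Aux

variable {R : Type*} [CommRing R] {n : ℕ}

variable {R : Type*} [CommRing R] {n : ℕ}

lemma binomprod_eq_univ (d i : Fin (n + 1) →₀ ℕ) :
    (∏ j ∈ d.support ∪ i.support, ((d j).choose (i j) : R))
      = ∏ j : Fin (n + 1), ((d j).choose (i j) : R) := by
  refine Finset.prod_subset (Finset.subset_univ _) fun j _ hj => ?_
  rw [Finset.mem_union, not_or, Finsupp.notMem_support_iff, Finsupp.notMem_support_iff] at hj
  rw [hj.1, hj.2]; simp

lemma eval_taylorCoeff (i : Fin (n + 1) →₀ ℕ) (f : MvPolynomial (Fin (n + 1)) R)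
    (x : Fin (n + 1) → R) :
    MvPolynomial.eval x (taylorCoeff i f) =
      ∑ d ∈ f.support, (∏ j : Fin (n + 1), ((d j).choose (i j) : R)) * f.coeff d
        * ∏ j : Fin (n + 1), x j ^ (d j - i j) := by
  rw [taylorCoeff, map_sum]
  refine Finset.sum_congr rfl fun d _ => ?_
  rw [MvPolynomial.eval_monomial, binomprod_eq_univ,
    Finsupp.prod_fintype _ _ (fun j => pow_zero _)]
  simp only [Finsupp.tsub_apply]

lemma binom_prod_identity (d : Fin (n + 1) →₀ ℕ) (x y : Fin (n + 1) → R) :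
    ∏ j : Fin (n + 1), (x j + y j) ^ d j =
      ∑ i ∈ Finset.Iic d, (∏ j : Fin (n + 1), ((d j).choose (i j) : R))
        * (∏ j : Fin (n + 1), x j ^ (d j - i j)) * ∏ j : Fin (n + 1), y j ^ (i j) := by
  have h1 : ∀ j : Fin (n + 1), (x j + y j) ^ d j =
      ∑ k ∈ Finset.range (d j + 1), y j ^ k * x j ^ (d j - k) * ((d j).choose k : R) := by
    intro j; rw [add_comm (x j), add_pow]
  calc ∏ j : Fin (n + 1), (x j + y j) ^ d j
      = ∑ g ∈ Fintype.piFinset (fun j => Finset.range (d j + 1)),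
          ∏ j : Fin (n + 1), (y j ^ g j * x j ^ (d j - g j) * ((d j).choose (g j) : R)) := by
        simp_rw [h1]; exact Finset.prod_univ_sum _ _
    _ = ∑ i ∈ Finset.Iic d, ∏ j : Fin (n + 1),
          (y j ^ i j * x j ^ (d j - i j) * ((d j).choose (i j) : R)) := by
        refine Finset.sum_nbij' (fun g => Finsupp.equivFunOnFinite.symm g)
          (fun i => ⇑i) ?_ ?_ ?_ ?_ ?_
        · intro g hg
          rw [Fintype.mem_piFinset] at hg
          rw [Finset.mem_Iic, Finsupp.le_def]
          intro j
          have := hg j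
          rw [Finset.mem_range] at this
          simpa [Finsupp.coe_equivFunOnFinite_symm] using Nat.lt_succ_iff.mp this
        · intro i hi
          rw [Finset.mem_Iic, Finsupp.le_def] at hi
          rw [Fintype.mem_piFinset]
          intro j; rw [Finset.mem_range]; exact Nat.lt_succ_of_le (hi j)
        · intro g _; ext j; simp [Finsupp.coe_equivFunOnFinite_symm]
        · intro i _; exact Finsupp.equivFunOnFinite.symm_apply_apply i
        · intro g _
          refine Finset.prod_congr rfl fun j _ => ?_
          simp [Finsupp.coe_equivFunOnFinite_symm]
    _ = _ := by
        refine Finset.sum_congr rfl fun i _ => ?_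
        rw [← Finset.prod_mul_distrib, ← Finset.prod_mul_distrib]
        refine Finset.prod_congr rfl fun j _ => ?_
        ring

lemma taylor_sum (f : MvPolynomial (Fin (n + 1)) R) (S : Finset (Fin (n + 1) →₀ ℕ))
    (hS : ∀ d ∈ f.support, Finset.Iic d ⊆ S) (x y : Fin (n + 1) → R) :
    MvPolynomial.eval (fun j => x j + y j) f =
      ∑ i ∈ S, MvPolynomial.eval x (taylorCoeff i f) * ∏ j : Fin (n + 1), y j ^ (i j) := by
  simp_rw [eval_taylorCoeff, Finset.sum_mul]
  rw [Finset.sum_comm, MvPolynomial.eval_eq']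
  refine Finset.sum_congr rfl fun d hd => ?_
  have hvanish : ∀ i ∈ S, i ∉ Finset.Iic d →
      (∏ j : Fin (n + 1), ((d j).choose (i j) : R)) * f.coeff d
        * (∏ j : Fin (n + 1), x j ^ (d j - i j)) * ∏ j : Fin (n + 1), y j ^ (i j) = 0 := by
    intro i _ hi
    rw [Finset.mem_Iic, Finsupp.le_def, not_forall] at hi
    obtain ⟨j, hj⟩ := hi
    have : ((d j).choose (i j) : R) = 0 := by
      rw [Nat.choose_eq_zero_of_lt (lt_of_not_ge hj)]; exact Nat.cast_zero
    rw [Finset.prod_eq_zero (Finset.mem_univ j) this]; ring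
  rw [← Finset.sum_subset (hS d hd) (by intro i hi hni; exact hvanish i hi hni)]
  rw [binom_prod_identity d x y, Finset.mul_sum]
  refine Finset.sum_congr rfl fun i _ => ?_
  ring



lemma degSum_zero : degSum (0 : Fin (n + 1) →₀ ℕ) = 0 := by
  simp [degSum]

lemma degSum_eq_support_sum (i : Fin (n + 1) →₀ ℕ) :
    degSum i = ∑ j ∈ i.support, i j := rfl

lemma degSum_eq_zero_iff {i : Fin (n + 1) →₀ ℕ} : degSum i = 0 ↔ i = 0 := by
  constructor
  · intro h
    rw [degSum_eq_support_sum, Finset.sum_eq_zero_iff] at h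
    ext j
    by_cases hj : j ∈ i.support
    · exact h j hj
    · exact Finsupp.notMem_support_iff.mp hj
  · rintro rfl; exact degSum_zero

lemma degSum_single (l : Fin (n + 1)) : degSum (Finsupp.single l 1) = 1 := by
  rw [degSum, Finsupp.sum_single_index]; rfl

lemma eq_single_of_degSum_eq_one {i : Fin (n + 1) →₀ ℕ} (h : degSum i = 1) :
    ∃ l, i = Finsupp.single l 1 := by
  have hcard : i.support.card = 1 := by
    have hle : i.support.card • 1 ≤ ∑ j ∈ i.support, i j :=
      Finset.card_nsmul_le_sum i.support (fun j => i j) 1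
        (fun j hj => Nat.one_le_iff_ne_zero.mpr (Finsupp.mem_support_iff.mp hj))
    have h' : ∑ j ∈ i.support, i j = 1 := by rw [← degSum_eq_support_sum]; exact h
    rw [h', smul_eq_mul, mul_one] at hle
    have h2 : i.support.Nonempty := by
      rw [Finset.nonempty_iff_ne_empty]
      intro hemp
      rw [degSum_eq_support_sum, hemp, Finset.sum_empty] at h
      exact one_ne_zero h.symm
    have := Finset.card_pos.mpr h2
    omega
  obtain ⟨l, hl, hi⟩ := Finsupp.card_support_eq_one.mp hcard
  refine ⟨l, ?_⟩
  have hval : i l = 1 := by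
    rw [hi, degSum, Finsupp.sum_single_index rfl] at h
    exact h
  rw [hi, hval]

lemma taylor_split (f : MvPolynomial (Fin (n + 1)) R) (x y : Fin (n + 1) → R) :
    ∃ T : Finset (Fin (n + 1) →₀ ℕ), (∀ i ∈ T, 2 ≤ degSum i) ∧
      MvPolynomial.eval (fun j => x j + y j) f = MvPolynomial.eval x f
        + (∑ l : Fin (n + 1),
            MvPolynomial.eval x (taylorCoeff (Finsupp.single l 1) f) * y l)
        + ∑ i ∈ T, MvPolynomial.eval x (taylorCoeff i f) * ∏ j : Fin (n + 1), y j ^ (i j) := by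
  classical
  set S : Finset (Fin (n + 1) →₀ ℕ) :=
    (f.support.biUnion Finset.Iic ∪ {0}) ∪
      Finset.image (fun l : Fin (n + 1) => Finsupp.single l 1) Finset.univ with hSdef
  have hS : ∀ d ∈ f.support, Finset.Iic d ⊆ S := fun d hd =>
    (Finset.subset_biUnion_of_mem _ hd).trans
      ((Finset.subset_union_left).trans Finset.subset_union_left)
  have h0S : (0 : Fin (n + 1) →₀ ℕ) ∈ S :=
    Finset.mem_union_left _ (Finset.mem_union_right _ (Finset.mem_singleton_self 0))
  have hsingleS : ∀ l : Fin (n + 1), Finsupp.single l 1 ∈ S := fun l =>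
    Finset.mem_union_right _ (Finset.mem_image_of_mem _ (Finset.mem_univ l))
  refine ⟨S.filter (fun i => 2 ≤ degSum i), fun i hi => (Finset.mem_filter.mp hi).2, ?_⟩
  rw [taylor_sum f S hS x y]
  have hpart : S.filter (fun i => degSum i = 0) ∪ S.filter (fun i => degSum i = 1) ∪
      S.filter (fun i => 2 ≤ degSum i) = S := by
    ext i
    simp only [Finset.mem_union, Finset.mem_filter]
    constructor
    · rintro ((⟨h, _⟩ | ⟨h, _⟩) | ⟨h, _⟩) <;> exact h
    · intro h
      have h2 : degSum i = 0 ∨ degSum i = 1 ∨ 2 ≤ degSum i := by omega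
      rcases h2 with h2 | h2 | h2
      · exact Or.inl (Or.inl ⟨h, h2⟩)
      · exact Or.inl (Or.inr ⟨h, h2⟩)
      · exact Or.inr ⟨h, h2⟩
  have hdisj1 : Disjoint (S.filter (fun i => degSum i = 0)) (S.filter (fun i => degSum i = 1)) := by
    rw [Finset.disjoint_left]
    intro i hi0 hi1
    rw [Finset.mem_filter] at hi0 hi1
    omega
  have hdisj2 : Disjoint (S.filter (fun i => degSum i = 0) ∪ S.filter (fun i => degSum i = 1))
      (S.filter (fun i => 2 ≤ degSum i)) := by
    rw [Finset.disjoint_union_left]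
    constructor <;> rw [Finset.disjoint_left] <;> intro i h1 h2 <;>
      rw [Finset.mem_filter] at h1 h2 <;> omega
  have hsplit : (∑ i ∈ S, MvPolynomial.eval x (taylorCoeff i f) * ∏ j : Fin (n + 1), y j ^ (i j))
      = ∑ i ∈ (S.filter (fun i => degSum i = 0) ∪ S.filter (fun i => degSum i = 1) ∪
          S.filter (fun i => 2 ≤ degSum i)),
        MvPolynomial.eval x (taylorCoeff i f) * ∏ j : Fin (n + 1), y j ^ (i j) :=
    Finset.sum_congr hpart.symm (fun _ _ => rfl)
  rw [hsplit, Finset.sum_union hdisj2, Finset.sum_union hdisj1]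
  congr 1
  congr 1
  · -- degSum = 0 part
    have h0 : S.filter (fun i => degSum i = 0) = {0} := by
      ext i
      simp only [Finset.mem_filter, Finset.mem_singleton]
      constructor
      · rintro ⟨_, h⟩; exact degSum_eq_zero_iff.mp h
      · rintro rfl; exact ⟨h0S, degSum_zero⟩
    rw [h0, Finset.sum_singleton]
    have : ∀ j : Fin (n + 1), y j ^ ((0 : Fin (n + 1) →₀ ℕ) j) = 1 := by
      intro j; rw [Finsupp.coe_zero, Pi.zero_apply, pow_zero]
    rw [Finset.prod_congr rfl (fun j _ => this j), Finset.prod_const_one, mul_one,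
      eval_taylorCoeff, MvPolynomial.eval_eq']
    refine Finset.sum_congr rfl fun d _ => ?_
    simp only [Finsupp.coe_zero, Pi.zero_apply, Nat.choose_zero_right, Nat.cast_one,
      Finset.prod_const_one, one_mul, Nat.sub_zero]
  · -- degSum = 1 part
    have h1 : S.filter (fun i => degSum i = 1) =
        Finset.image (fun l : Fin (n + 1) => Finsupp.single l 1) Finset.univ := by
      ext i
      simp only [Finset.mem_filter, Finset.mem_image]
      constructor
      · rintro ⟨_, h⟩
        obtain ⟨l, rfl⟩ := eq_single_of_degSum_eq_one h
        exact ⟨l, Finset.mem_univ l, rfl⟩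
      · rintro ⟨l, -, rfl⟩; exact ⟨hsingleS l, degSum_single l⟩
    rw [h1, Finset.sum_image (fun l _ l' _ h =>
      Finsupp.single_left_injective one_ne_zero h)]
    refine Finset.sum_congr rfl fun l _ => ?_
    congr 1
    have : ∀ j : Fin (n + 1), y j ^ ((Finsupp.single l 1) j) =
        if l = j then y j else 1 := by
      intro j
      rw [Finsupp.single_apply]
      split <;> simp
    rw [Finset.prod_congr rfl (fun j _ => this j), Finset.prod_ite_eq,
      if_pos (Finset.mem_univ l)]

end Aux


section VAux

variable {K : Type u} {Γ : Type v} {k : Type w}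
variable [Field K] [AddCommGroup Γ] [LinearOrder Γ] [IsOrderedAddMonoid Γ] [Field k]

lemma v_ne_top (M : ValuedField K Γ k) {a : K} (h : a ≠ 0) : M.v a ≠ ⊤ :=
  fun ht => h ((M.v_top_iff a).mp ht)

lemma v_zero (M : ValuedField K Γ k) : M.v 0 = ⊤ := (M.v_top_iff 0).mpr rfl

lemma v_one (M : ValuedField K Γ k) : M.v 1 = 0 := by
  have h := M.v_mul 1 1
  rw [one_mul] at h
  obtain ⟨g, hg⟩ := WithTop.ne_top_iff_exists.mp (v_ne_top M (one_ne_zero (α := K)))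
  rw [← hg, ← WithTop.coe_add, WithTop.coe_eq_coe] at h
  have hg0 : g = 0 := (left_eq_add.mp h)
  rw [← hg, hg0, WithTop.coe_zero]

lemma v_neg (M : ValuedField K Γ k) (a : K) : M.v (-a) = M.v a := by
  have h1 : M.v (-1 : K) = 0 := by
    have h := M.v_mul (-1 : K) (-1)
    rw [neg_one_mul, neg_neg, v_one M] at h
    obtain ⟨g, hg⟩ := WithTop.ne_top_iff_exists.mp (v_ne_top M (neg_ne_zero.mpr (one_ne_zero (α := K))))
    rw [← hg, ← WithTop.coe_add] at h
    have : (0 : WithTop Γ) = ((0 : Γ) : WithTop Γ) := rfl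
    rw [this, WithTop.coe_eq_coe] at h
    have hg0 : g = 0 := by
      by_contra hne
      rcases lt_or_gt_of_ne hne with hlt | hgt
      · have h2 : g + g < 0 + 0 := add_lt_add hlt hlt
        rw [add_zero] at h2
        exact absurd h.symm (ne_of_lt h2)
      · have h2 : (0 : Γ) + 0 < g + g := add_lt_add hgt hgt
        rw [add_zero] at h2
        exact absurd h (ne_of_lt h2)
    rw [← hg, hg0, WithTop.coe_zero]
  calc M.v (-a) = M.v ((-1) * a) := by rw [neg_one_mul]
  _ = M.v (-1 : K) + M.v a := M.v_mul _ _
  _ = M.v a := by rw [h1, zero_add]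

lemma v_sub_le (M : ValuedField K Γ k) (a b : K) :
    min (M.v a) (M.v b) ≤ M.v (a - b) := by
  rw [sub_eq_add_neg]
  have h := M.v_add a (-b)
  rwa [v_neg M b] at h

lemma v_pow (M : ValuedField K Γ k) (a : K) (m : ℕ) : M.v (a ^ m) = m • M.v a := by
  induction m with
  | zero => rw [pow_zero, v_one M, zero_smul]
  | succ m ih => rw [pow_succ, M.v_mul, ih, succ_nsmul]

lemma v_natCast_nonneg (M : ValuedField K Γ k) (m : ℕ) : 0 ≤ M.v (m : K) := by
  induction m with
  | zero => rw [Nat.cast_zero, v_zero M]; exact le_top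
  | succ m ih =>
    rw [Nat.cast_succ]
    refine le_trans (le_min ih ?_) (M.v_add _ _)
    rw [v_one M]

lemma v_sum_le (M : ValuedField K Γ k) {ι : Type*} (s : Finset ι) (g : ι → K)
    (c : WithTop Γ) :
    (∀ t ∈ s, c ≤ M.v (g t)) → c ≤ M.v (∑ t ∈ s, g t) := by
  classical
  induction s using Finset.cons_induction with
  | empty => intro _; rw [Finset.sum_empty, v_zero M]; exact le_top
  | cons a s ha ih =>
    intro h
    rw [Finset.sum_cons]
    exact le_trans (le_min (h a (Finset.mem_cons_self a s))
      (ih fun t ht => h t (Finset.mem_cons_of_mem ht))) (M.v_add _ _)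

lemma v_prod_eq (M : ValuedField K Γ k) {ι : Type*} (s : Finset ι) (g : ι → K) :
    M.v (∏ t ∈ s, g t) = ∑ t ∈ s, M.v (g t) := by
  classical
  induction s using Finset.cons_induction with
  | empty => rw [Finset.prod_empty, Finset.sum_empty, v_one M]
  | cons a s ha ih =>
    rw [Finset.prod_cons, Finset.sum_cons, M.v_mul, ih]

lemma v_add_eq_of_lt (M : ValuedField K Γ k) {a b : K} (h : M.v b < M.v a) :
    M.v (a + b) = M.v b := by
  have hge : M.v b ≤ M.v (a + b) := le_trans (le_min h.le le_rfl) (M.v_add a b)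
  refine le_antisymm ?_ hge
  by_contra hc
  push_neg at hc
  have h2 : M.v b = M.v ((a + b) + (-a)) := by
    congr 1
    ring
  have h3 : min (M.v (a + b)) (M.v (-a)) ≤ M.v b := h2 ▸ M.v_add _ _
  rw [v_neg M] at h3
  exact absurd h3 (not_le.mpr (lt_min hc h))

lemma π_zero (M : ValuedField K Γ k) : M.π 0 = 0 := by
  refine (M.π_eq_zero_iff 0 ?_).mpr ?_ <;> rw [v_zero M]
  · exact le_top
  · exact lt_of_le_of_lt (le_refl 0) (by exact lt_top_iff_ne_top.mpr (by simp))

lemma π_sum (M : ValuedField K Γ k) {ι : Type*} (s : Finset ι) (g : ι → K)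
    (h : ∀ t ∈ s, 0 ≤ M.v (g t)) : M.π (∑ t ∈ s, g t) = ∑ t ∈ s, M.π (g t) := by
  classical
  induction s using Finset.cons_induction with
  | empty => rw [Finset.sum_empty, Finset.sum_empty, π_zero M]
  | cons a s ha ih =>
    rw [Finset.sum_cons, Finset.sum_cons,
      M.π_add _ _ (h a (Finset.mem_cons_self a s))
        (v_sum_le M s g 0 fun t ht => h t (Finset.mem_cons_of_mem ht)),
      ih fun t ht => h t (Finset.mem_cons_of_mem ht)]

lemma nsmul_nonneg' {c : WithTop Γ} (hc : 0 ≤ c) (m : ℕ) : 0 ≤ m • c := by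
  induction m with
  | zero => rw [zero_smul]
  | succ m ih => rw [succ_nsmul]; exact add_nonneg ih hc

lemma le_nsmul' {c : WithTop Γ} (hc : 0 ≤ c) {m : ℕ} (hm : 1 ≤ m) : c ≤ m • c := by
  obtain ⟨p, rfl⟩ := Nat.exists_eq_add_of_le hm
  rw [add_comm, succ_nsmul]
  exact le_add_of_nonneg_left (nsmul_nonneg' hc p)

lemma lt_nsmul' {c : WithTop Γ} (h0 : 0 < c) (ht : c ≠ ⊤) {m : ℕ} (hm : 2 ≤ m) :
    c < m • c := by
  obtain ⟨p, rfl⟩ := Nat.exists_eq_add_of_le hm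
  have h1 : 2 + p = (p + 1) + 1 := by omega
  rw [h1, succ_nsmul]
  calc c = c + 0 := (add_zero c).symm
  _ < c + c := WithTop.add_lt_add_left ht h0
  _ ≤ (p + 1) • c + c := add_le_add_left (le_nsmul' h0.le (Nat.le_add_left 1 p)) c

lemma nsmul_le_nsmul'' {c : WithTop Γ} (hc : 0 ≤ c) {m m' : ℕ} (h : m ≤ m') :
    m • c ≤ m' • c := by
  obtain ⟨p, rfl⟩ := Nat.exists_eq_add_of_le h
  rw [add_nsmul]
  exact le_add_of_nonneg_right (nsmul_nonneg' hc p)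

variable (M : ValuedDiffField K Γ k)

lemma v_iter (j : ℕ) (x : K) : M.v ((⇑M.σ)^[j] x) = M.v x := by
  induction j with
  | zero => rfl
  | succ j ih => rw [Function.iterate_succ_apply', M.v_σ, ih]

lemma π_iter (j : ℕ) (x : K) : M.π ((⇑M.σ)^[j] x) = (⇑M.σr)^[j] (M.π x) := by
  induction j with
  | zero => rfl
  | succ j ih => rw [Function.iterate_succ_apply', Function.iterate_succ_apply', M.π_σ, ih]

lemma iter_add (j : ℕ) (x y : K) :
    (⇑M.σ)^[j] (x + y) = (⇑M.σ)^[j] x + (⇑M.σ)^[j] y := by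
  induction j with
  | zero => rfl
  | succ j ih => rw [Function.iterate_succ_apply', Function.iterate_succ_apply',
      Function.iterate_succ_apply', ih, map_add]

lemma iter_mul (j : ℕ) (x y : K) :
    (⇑M.σ)^[j] (x * y) = (⇑M.σ)^[j] x * (⇑M.σ)^[j] y := by
  induction j with
  | zero => rfl
  | succ j ih => rw [Function.iterate_succ_apply', Function.iterate_succ_apply',
      Function.iterate_succ_apply', ih, map_mul]

lemma iterr_zero (j : ℕ) : (⇑M.σr)^[j] (0 : k) = 0 := by
  induction j with
  | zero => rfl
  | succ j ih => rw [Function.iterate_succ_apply', ih, map_zero]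

end VAux

section OAux

variable {K : Type u} {Γ : Type v} {k : Type w}
variable [Field K] [AddCommGroup Γ] [LinearOrder Γ] [IsOrderedAddMonoid Γ] [Field k] {n : ℕ}

lemma coeffsInO_taylorCoeff (M : ValuedField K Γ k) {f : MvPolynomial (Fin (n + 1)) K}
    (hf : CoeffsInO M f) (i : Fin (n + 1) →₀ ℕ) : CoeffsInO M (taylorCoeff i f) := by
  intro e
  rw [taylorCoeff, MvPolynomial.coeff_sum]
  refine v_sum_le M _ _ _ (fun d _ => ?_)
  rw [MvPolynomial.coeff_monomial]
  split
  · rw [M.v_mul]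
    refine add_nonneg ?_ (hf d)
    rw [binomprod_eq_univ, ← Nat.cast_prod]
    exact v_natCast_nonneg M _
  · rw [v_zero M]; exact le_top

lemma v_eval_nonneg (M : ValuedField K Γ k) {g : MvPolynomial (Fin (n + 1)) K}
    (hg : CoeffsInO M g) {x : Fin (n + 1) → K} (hx : ∀ j, 0 ≤ M.v (x j)) :
    0 ≤ M.v (MvPolynomial.eval x g) := by
  rw [MvPolynomial.eval_eq']
  refine v_sum_le M _ _ _ (fun d _ => ?_)
  rw [M.v_mul]
  refine add_nonneg (hg d) ?_
  rw [v_prod_eq M]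
  refine Finset.sum_nonneg fun j _ => ?_
  rw [v_pow M]
  exact nsmul_nonneg' (hx j) _

/-- Key continuity lemma: for `f` over `O` and `a, b ∈ O`,
`v (f(b) - f(a)) ≥ v (b - a)`. -/
lemma v_evalDiff_sub (M : ValuedDiffField K Γ k) {f : MvPolynomial (Fin (n + 1)) K}
    (hf : CoeffsInO M.toValuedField f) {a b : K} (ha : 0 ≤ M.v a) (hb : 0 ≤ M.v b) :
    M.v (b - a) ≤ M.v (evalDiff (⇑M.σ) f b - evalDiff (⇑M.σ) f a) := by
  classical
  set x : Fin (n + 1) → K := fun j => (⇑M.σ)^[(j : ℕ)] a with hx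
  set y : Fin (n + 1) → K := fun j => (⇑M.σ)^[(j : ℕ)] (b - a) with hy
  have hxO : ∀ j, 0 ≤ M.v (x j) := fun j => by rw [hx]; rw [v_iter M]; exact ha
  have hba : 0 ≤ M.v (b - a) := le_trans (le_min hb ha) (v_sub_le M.toValuedField b a)
  have hyv : ∀ j, M.v (y j) = M.v (b - a) := fun j => v_iter M _ _
  obtain ⟨T, hT2, heq⟩ := taylor_split f x y
  have hpt : (fun j : Fin (n + 1) => (⇑M.σ)^[(j : ℕ)] b) = fun j => x j + y j := by
    funext j
    show (⇑M.σ)^[(j : ℕ)] b = (⇑M.σ)^[(j : ℕ)] a + (⇑M.σ)^[(j : ℕ)] (b - a)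
    rw [← iter_add M]
    congr 1
    ring
  have hbxy : evalDiff (⇑M.σ) f b = MvPolynomial.eval (fun j => x j + y j) f := by
    unfold evalDiff
    rw [hpt]
  rw [hbxy, heq]
  have h1 : evalDiff (⇑M.σ) f a = MvPolynomial.eval x f := rfl
  rw [h1]
  have h2 : MvPolynomial.eval x f
      + (∑ l : Fin (n + 1), MvPolynomial.eval x (taylorCoeff (Finsupp.single l 1) f) * y l)
      + (∑ i ∈ T, MvPolynomial.eval x (taylorCoeff i f) * ∏ j : Fin (n + 1), y j ^ (i j))
      - MvPolynomial.eval x f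
      = (∑ l : Fin (n + 1), MvPolynomial.eval x (taylorCoeff (Finsupp.single l 1) f) * y l)
      + (∑ i ∈ T, MvPolynomial.eval x (taylorCoeff i f) * ∏ j : Fin (n + 1), y j ^ (i j)) := by
    ring
  rw [h2]
  refine le_trans (le_min ?_ ?_) (M.v_add _ _)
  · refine v_sum_le M.toValuedField _ _ _ (fun l _ => ?_)
    rw [M.v_mul, hyv l]
    exact le_add_of_nonneg_left (v_eval_nonneg M.toValuedField
      (coeffsInO_taylorCoeff M.toValuedField hf _) hxO)
  · refine v_sum_le M.toValuedField _ _ _ (fun i hi => ?_)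
    rw [M.v_mul]
    refine le_trans ?_ (le_add_of_nonneg_left (v_eval_nonneg M.toValuedField
      (coeffsInO_taylorCoeff M.toValuedField hf _) hxO))
    rw [v_prod_eq M.toValuedField]
    have h3 : ∀ j : Fin (n + 1), M.v (y j ^ (i j)) = (i j) • M.v (b - a) := by
      intro j
      rw [v_pow M.toValuedField, hyv j]
    rw [Finset.sum_congr rfl (fun j _ => h3 j), ← Finset.sum_smul]
    refine le_nsmul' hba ?_
    have : degSum i = ∑ j : Fin (n + 1), i j := by
      rw [degSum, Finsupp.sum_fintype]
      intro j; rfl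
    rw [← this]
    have := hT2 i hi
    omega

end OAux

/-- Lemma 5.2 ("newton"): Newton–Hensel approximation step. -/
theorem stmt8 {K : Type u} {Γ : Type v} {k : Type w}
    [Field K] [AddCommGroup Γ] [LinearOrder Γ] [IsOrderedAddMonoid Γ] [Field k]
    (M : ValuedDiffField K Γ k) (n : ℕ) (h4 : Axiom4n M n)
    (f : MvPolynomial (Fin (n + 1)) K) (hf : CoeffsInO M.toValuedField f)
    (a : K) (ha : 0 ≤ M.v a) (hH : SigmaHenselAt M f a)
    (hne : evalDiff (⇑M.σ) f a ≠ 0) :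
    (∃ b : K, M.v (evalDiff (⇑M.σ) f a) ≤ M.v (a - b) ∧
      M.v (evalDiff (⇑M.σ) f a) < M.v (evalDiff (⇑M.σ) f b)) ∧
    (∀ b : K, M.v (evalDiff (⇑M.σ) f a) ≤ M.v (a - b) →
      M.v (evalDiff (⇑M.σ) f a) < M.v (evalDiff (⇑M.σ) f b) →
      M.v (a - b) = M.v (evalDiff (⇑M.σ) f a) ∧ SigmaHenselAt M f b) := by
  classical
  obtain ⟨hpos, hmin⟩ := hH
  set gA : K := evalDiff (⇑M.σ) f a with hgAdef
  have hgAtop : M.v gA ≠ ⊤ := v_ne_top M.toValuedField hne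
  set A : Fin (n + 1) → K :=
    fun l => evalDiff (⇑M.σ) (taylorCoeff (Finsupp.single l 1) f) a with hAdef
  have hxO : ∀ j : Fin (n + 1), 0 ≤ M.v ((⇑M.σ)^[(j : ℕ)] a) := fun j => by
    rw [v_iter M]; exact ha
  have hAnn : ∀ l, 0 ≤ M.v (A l) := fun l =>
    v_eval_nonneg M.toValuedField (coeffsInO_taylorCoeff M.toValuedField hf _) hxO
  have hmin' : Finset.univ.inf (fun l : Fin (n + 1) => M.v (A l)) = 0 := hmin
  obtain ⟨l₀, -, hl₀⟩ := Finset.exists_mem_eq_inf Finset.univ Finset.univ_nonempty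
    (fun l : Fin (n + 1) => M.v (A l))
  have hAl₀ : M.v (A l₀) = 0 := by rw [← hl₀]; exact hmin'
  -- Part 2 first (needed verbatim)
  have part2 : ∀ b : K, M.v gA ≤ M.v (a - b) →
      M.v gA < M.v (evalDiff (⇑M.σ) f b) →
      M.v (a - b) = M.v gA ∧ SigmaHenselAt M f b := by
    intro b hb1 hb2
    have hbO : 0 ≤ M.v b := by
      have h5 : b = a - (a - b) := by ring
      have h6 := v_sub_le M.toValuedField a (a - b)
      rw [← h5] at h6
      exact le_trans (le_min ha (le_trans hpos.le hb1)) h6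
    have hEq : M.v (evalDiff (⇑M.σ) f b - evalDiff (⇑M.σ) f a) = M.v gA := by
      have h6 : evalDiff (⇑M.σ) f b - evalDiff (⇑M.σ) f a
          = evalDiff (⇑M.σ) f b + (-gA) := by rw [sub_eq_add_neg]
      rw [h6, v_add_eq_of_lt M.toValuedField (by rw [v_neg M.toValuedField]; exact hb2),
        v_neg M.toValuedField]
    have hkey := v_evalDiff_sub M hf ha hbO
    rw [hEq] at hkey
    have habs : M.v (a - b) = M.v (b - a) := by
      rw [show a - b = -(b - a) by ring, v_neg M.toValuedField]
    have hab2 : M.v (a - b) = M.v gA := le_antisymm (habs ▸ hkey) hb1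
    refine ⟨hab2, lt_trans hpos hb2, ?_⟩
    have hdiffl : ∀ l : Fin (n + 1), 0 < M.v
        (evalDiff (⇑M.σ) (taylorCoeff (Finsupp.single l 1) f) b - A l) := by
      intro l
      have h7 := v_evalDiff_sub M (coeffsInO_taylorCoeff M.toValuedField hf
        (Finsupp.single l 1)) ha hbO
      refine lt_of_lt_of_le hpos (le_trans ?_ h7)
      rw [← habs, hab2]
    have hBnn : ∀ l : Fin (n + 1), 0 ≤ M.v
        (evalDiff (⇑M.σ) (taylorCoeff (Finsupp.single l 1) f) b) := by
      intro l
      have h8 : evalDiff (⇑M.σ) (taylorCoeff (Finsupp.single l 1) f) b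
          = (evalDiff (⇑M.σ) (taylorCoeff (Finsupp.single l 1) f) b - A l) + A l := by ring
      rw [h8]
      exact le_trans (le_min (hdiffl l).le (hAnn l)) (M.v_add _ _)
    have hB0 : M.v (evalDiff (⇑M.σ) (taylorCoeff (Finsupp.single l₀ 1) f) b) = 0 := by
      have h8 : evalDiff (⇑M.σ) (taylorCoeff (Finsupp.single l₀ 1) f) b
          = (evalDiff (⇑M.σ) (taylorCoeff (Finsupp.single l₀ 1) f) b - A l₀) + A l₀ := by ring
      rw [h8, v_add_eq_of_lt M.toValuedField (by rw [hAl₀]; exact hdiffl l₀), hAl₀]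
    show Finset.univ.inf (fun i : Fin (n + 1) =>
      M.v (evalDiff (⇑M.σ) (taylorCoeff (Finsupp.single i 1) f) b)) = 0
    refine le_antisymm ?_ (Finset.le_inf fun l _ => hBnn l)
    exact le_trans (Finset.inf_le (Finset.mem_univ l₀)) (le_of_eq hB0)
  -- Part 1: construction
  have hgAne : gA ≠ 0 := hne
  set β : Fin (n + 1) → K := fun l => A l * (⇑M.σ)^[(l : ℕ)] gA / gA with hβdef
  have hβmul : ∀ l, β l * gA = A l * (⇑M.σ)^[(l : ℕ)] gA := fun l =>
    div_mul_cancel₀ _ hgAne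
  have hvβ : ∀ l, M.v (β l) = M.v (A l) := by
    intro l
    have h1 : M.v (β l) + M.v gA = M.v (A l) + M.v gA := by
      rw [← M.v_mul, hβmul l, M.v_mul, v_iter M]
    exact WithTop.add_right_cancel hgAtop h1
  set α : Fin (n + 1) → k := fun l => M.π (β l) with hαdef
  have hα : α l₀ ≠ 0 := by
    intro h0
    have h9 := (M.π_eq_zero_iff (β l₀) (by rw [hvβ l₀]; exact hAnn l₀)).mp h0
    rw [hvβ l₀, hAl₀] at h9
    exact lt_irrefl _ h9
  obtain ⟨ybar, hybar⟩ := h4 α ⟨l₀, hα⟩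
  have hybar0 : ybar ≠ 0 := by
    intro h0
    rw [h0] at hybar
    simp only [iterr_zero M, mul_zero, Finset.sum_const_zero, add_zero] at hybar
    exact one_ne_zero hybar
  obtain ⟨u, hu⟩ := M.π_surj ybar
  have huO : 0 ≤ M.v u := by
    by_contra hc
    exact hybar0 (hu ▸ M.π_junk u hc)
  have hvu : M.v u = 0 := by
    refine le_antisymm ?_ huO
    by_contra hc
    push_neg at hc
    exact hybar0 (hu ▸ (M.π_eq_zero_iff u huO).mpr hc)
  set c : K := gA * u with hcdef
  have hvc : M.v c = M.v gA := by rw [hcdef, M.v_mul, hvu, add_zero]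
  set b : K := a + c with hbdef
  set x : Fin (n + 1) → K := fun j => (⇑M.σ)^[(j : ℕ)] a with hxdef
  set y : Fin (n + 1) → K := fun j => (⇑M.σ)^[(j : ℕ)] c with hydef
  have hyv : ∀ j : Fin (n + 1), M.v (y j) = M.v gA := fun j => by
    rw [hydef]
    show M.v ((⇑M.σ)^[(j : ℕ)] c) = M.v gA
    rw [v_iter M, hvc]
  obtain ⟨T, hT2, heq⟩ := taylor_split f x y
  have hpt : (fun j : Fin (n + 1) => (⇑M.σ)^[(j : ℕ)] b) = fun j => x j + y j := by
    funext j
    show (⇑M.σ)^[(j : ℕ)] b = (⇑M.σ)^[(j : ℕ)] a + (⇑M.σ)^[(j : ℕ)] c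
    rw [← iter_add M]
  have hbxy : evalDiff (⇑M.σ) f b = MvPolynomial.eval (fun j => x j + y j) f := by
    unfold evalDiff
    rw [hpt]
  have hylc : ∀ l : Fin (n + 1), A l * y l = (β l * (⇑M.σ)^[(l : ℕ)] u) * gA := by
    intro l
    have hyl : y l = (⇑M.σ)^[(l : ℕ)] gA * (⇑M.σ)^[(l : ℕ)] u := iter_mul M _ _ _
    rw [hyl, ← mul_assoc, ← hβmul l]
    ring
  set w : K := 1 + ∑ l : Fin (n + 1), β l * (⇑M.σ)^[(l : ℕ)] u with hwdef
  have hGb : evalDiff (⇑M.σ) f b = gA * w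
      + ∑ i ∈ T, MvPolynomial.eval x (taylorCoeff i f) * ∏ j : Fin (n + 1), y j ^ (i j) := by
    rw [hbxy, heq]
    have h1 : MvPolynomial.eval x f = gA := rfl
    have h2 : (∑ l : Fin (n + 1),
        MvPolynomial.eval x (taylorCoeff (Finsupp.single l 1) f) * y l)
        = (∑ l : Fin (n + 1), β l * (⇑M.σ)^[(l : ℕ)] u) * gA := by
      rw [Finset.sum_mul]
      exact Finset.sum_congr rfl fun l _ => hylc l
    rw [h1, h2, hwdef]
    ring
  have hβu : ∀ l : Fin (n + 1), 0 ≤ M.v (β l * (⇑M.σ)^[(l : ℕ)] u) := by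
    intro l
    rw [M.v_mul]
    refine add_nonneg (by rw [hvβ l]; exact hAnn l) (by rw [v_iter M]; exact huO)
  have hsumO : 0 ≤ M.v (∑ l : Fin (n + 1), β l * (⇑M.σ)^[(l : ℕ)] u) :=
    v_sum_le M.toValuedField _ _ _ fun l _ => hβu l
  have hπw : M.π w = 0 := by
    rw [hwdef, M.π_add _ _ (by rw [v_one M.toValuedField]) hsumO, M.π_one,
      π_sum M.toValuedField _ _ fun l _ => hβu l]
    have h3 : ∀ l : Fin (n + 1), M.π (β l * (⇑M.σ)^[(l : ℕ)] u)
        = α l * (⇑M.σr)^[(l : ℕ)] ybar := by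
      intro l
      rw [M.π_mul _ _ (by rw [hvβ l]; exact hAnn l) (by rw [v_iter M]; exact huO),
        π_iter M, hu]
    rw [Finset.sum_congr rfl fun l _ => h3 l]
    exact hybar
  have hwO : 0 ≤ M.v w := by
    rw [hwdef]
    exact le_trans (le_min (by rw [v_one M.toValuedField]) hsumO) (M.v_add 1 _)
  have hvw : 0 < M.v w := (M.π_eq_zero_iff w hwO).mp hπw
  have hmain : M.v gA < M.v (gA * w) := by
    rw [M.v_mul]
    calc M.v gA = M.v gA + 0 := (add_zero _).symm
    _ < M.v gA + M.v w := WithTop.add_lt_add_left hgAtop hvw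
  have htail : ∀ i ∈ T, (2 : ℕ) • M.v gA ≤
      M.v (MvPolynomial.eval x (taylorCoeff i f) * ∏ j : Fin (n + 1), y j ^ (i j)) := by
    intro i hi
    rw [M.v_mul]
    refine le_trans ?_ (le_add_of_nonneg_left (v_eval_nonneg M.toValuedField
      (coeffsInO_taylorCoeff M.toValuedField hf _) hxO))
    rw [v_prod_eq M.toValuedField]
    have h4' : ∀ j : Fin (n + 1), M.v (y j ^ (i j)) = (i j) • M.v gA := by
      intro j
      rw [v_pow M.toValuedField, hyv j]
    rw [Finset.sum_congr rfl fun j _ => h4' j, ← Finset.sum_smul]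
    refine nsmul_le_nsmul'' hpos.le ?_
    have hdeg : degSum i = ∑ j : Fin (n + 1), i j := by
      rw [degSum, Finsupp.sum_fintype]
      intro j; rfl
    rw [← hdeg]
    exact hT2 i hi
  have htailsum : (2 : ℕ) • M.v gA ≤ M.v (∑ i ∈ T,
      MvPolynomial.eval x (taylorCoeff i f) * ∏ j : Fin (n + 1), y j ^ (i j)) :=
    v_sum_le M.toValuedField _ _ _ htail
  have h2gA : M.v gA < (2 : ℕ) • M.v gA := lt_nsmul' hpos hgAtop le_rfl
  have hGbv : M.v gA < M.v (evalDiff (⇑M.σ) f b) := by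
    rw [hGb]
    exact lt_of_lt_of_le (lt_min hmain (lt_of_lt_of_le h2gA htailsum)) (M.v_add _ _)
  have hab : M.v (a - b) = M.v gA := by
    have h5 : a - b = -c := by rw [hbdef]; ring
    rw [h5, v_neg M.toValuedField, hvc]
  exact ⟨⟨b, le_of_eq hab.symm, hGbv⟩, part2⟩

end VDFPaper
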